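/- For every integer d ≥ 1, the function x ↦ rect(Σ_{j=1}^d t(x_j) − 2(d−1)) on ℝ^d is Lebesgue integrable, and its integral I satisfies 2^{d+1} ≤ I ≤ 2·6^d. Consequently the normalizing constant C_d = 1/I exists and satisfies 6^{−d}/2 ≤ C_d ≤ 2^{−(d+1)}; moreover for d = 1 one has C_1 = 1/8. -/

import Mathlib

open MeasureTheory

/-- The rectifier (ReLU) function. -/
noncomputable def rect (x : ℝ) : ℝ := max 0 x

/-- The trapezoid function `t`. -/
noncomputable def trap (x : ℝ) : ℝ := rect (x + 3) - rect (x + 1) - rect (x - 1) + rect (x - 3)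


lemma rect_nonneg (x : ℝ) : 0 ≤ rect x := le_max_left _ _
lemma rect_of_nonneg {x : ℝ} (h : 0 ≤ x) : rect x = x := max_eq_right h
lemma rect_of_nonpos {x : ℝ} (h : x ≤ 0) : rect x = 0 := max_eq_left h

lemma trap_nonneg (x : ℝ) : 0 ≤ trap x := by
  unfold trap
  rcases le_total (x+3) 0 with h1|h1 <;> rcases le_total (x+1) 0 with h2|h2 <;>
    rcases le_total (x-1) 0 with h3|h3 <;> rcases le_total (x-3) 0 with h4|h4 <;>
    simp only [rect_of_nonneg, rect_of_nonpos, *] <;> linarith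

lemma trap_le_two (x : ℝ) : trap x ≤ 2 := by
  unfold trap
  rcases le_total (x+3) 0 with h1|h1 <;> rcases le_total (x+1) 0 with h2|h2 <;>
    rcases le_total (x-1) 0 with h3|h3 <;> rcases le_total (x-3) 0 with h4|h4 <;>
    simp only [rect_of_nonneg, rect_of_nonpos, *] <;> linarith

lemma trap_eq_two {x : ℝ} (h1 : -1 ≤ x) (h2 : x ≤ 1) : trap x = 2 := by
  unfold trap
  rw [rect_of_nonneg (by linarith), rect_of_nonneg (by linarith),
    rect_of_nonpos (by linarith), rect_of_nonpos (by linarith)]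
  ring

lemma trap_eq_zero' {x : ℝ} (h : x ≤ -3 ∨ 3 ≤ x) : trap x = 0 := by
  unfold trap
  rcases h with h|h
  · rw [rect_of_nonpos (by linarith), rect_of_nonpos (by linarith),
      rect_of_nonpos (by linarith), rect_of_nonpos (by linarith)]; ring
  · rw [rect_of_nonneg (by linarith), rect_of_nonneg (by linarith),
      rect_of_nonneg (by linarith), rect_of_nonneg (by linarith)]; ring

lemma trap_continuous : Continuous trap := by
  unfold trap rect; fun_prop

noncomputable def F (d : ℕ) : (Fin d → ℝ) → ℝ :=
  fun x => rect ((∑ j, trap (x j)) - 2 * ((d : ℝ) - 1))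

lemma F_nonneg (d : ℕ) (x : Fin d → ℝ) : 0 ≤ F d x := rect_nonneg _

lemma F_le_two (d : ℕ) (x : Fin d → ℝ) : F d x ≤ 2 := by
  unfold F rect
  have h : (∑ j, trap (x j)) ≤ ∑ _j : Fin d, (2:ℝ) :=
    Finset.sum_le_sum (fun j _ => trap_le_two (x j))
  simp only [Finset.sum_const, Finset.card_univ, Fintype.card_fin, smul_eq_mul, nsmul_eq_mul] at h
  have : (∑ j, trap (x j)) - 2 * ((d : ℝ) - 1) ≤ 2 := by push_cast at h ⊢; linarith
  exact max_le (by norm_num) this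

lemma F_eq_zero {d : ℕ} {x : Fin d → ℝ} (hd : 1 ≤ d)
    (hx : x ∉ Set.pi Set.univ (fun _ : Fin d => Set.Icc (-3:ℝ) 3)) : F d x = 0 := by
  simp only [Set.mem_pi, Set.mem_univ, Set.mem_Icc, forall_true_left, not_forall] at hx
  obtain ⟨j, hj⟩ := hx
  have hj0 : trap (x j) = 0 := by
    apply trap_eq_zero'
    rcases le_or_gt (x j) (-3) with h|h
    · exact Or.inl h
    · rcases le_or_gt 3 (x j) with h2|h2
      · exact Or.inr h2
      · exact absurd ⟨h.le, h2.le⟩ hj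
  unfold F
  apply rect_of_nonpos
  have h : (∑ k, trap (x k)) ≤ ∑ k ∈ Finset.univ.erase j, (2:ℝ) := by
    rw [← Finset.add_sum_erase _ _ (Finset.mem_univ j), hj0, zero_add]
    exact Finset.sum_le_sum (fun k _ => trap_le_two (x k))
  have hcard : ((Finset.univ.erase j).card : ℝ) = (d : ℝ) - 1 := by
    rw [Finset.card_erase_of_mem (Finset.mem_univ j)]
    simp only [Finset.card_univ, Fintype.card_fin]
    have : 1 ≤ d := hd
    push_cast [Nat.cast_sub this]; ring
  simp only [Finset.sum_const, smul_eq_mul, nsmul_eq_mul, hcard] at h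
  linarith

lemma F_eq_two {d : ℕ} {x : Fin d → ℝ}
    (hx : x ∈ Set.pi Set.univ (fun _ : Fin d => Set.Icc (-1:ℝ) 1)) : F d x = 2 := by
  simp only [Set.mem_pi, Set.mem_univ, Set.mem_Icc, forall_true_left] at hx
  have h : (∑ j, trap (x j)) = ∑ _j : Fin d, (2:ℝ) :=
    Finset.sum_congr rfl (fun j _ => trap_eq_two (hx j).1 (hx j).2)
  unfold F
  rw [h]
  simp only [Finset.sum_const, Finset.card_univ, Fintype.card_fin, smul_eq_mul]
  rw [rect_of_nonneg (by ring_nf; linarith)]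
  ring

lemma F_continuous (d : ℕ) : Continuous (F d) := by
  unfold F trap rect
  fun_prop

lemma F_integrable (d : ℕ) (hd : 1 ≤ d) : Integrable (F d) := by
  apply (F_continuous d).integrable_of_hasCompactSupport
  apply HasCompactSupport.of_support_subset_isCompact
    (isCompact_univ_pi (fun _ => isCompact_Icc))
  intro x hx
  by_contra hc
  exact hx (F_eq_zero hd hc)

lemma volume_box (d : ℕ) (a : ℝ) (ha : 0 ≤ a) :
    volume (Set.pi Set.univ (fun _ : Fin d => Set.Icc (-a) a)) = ENNReal.ofReal (2*a) ^ d := by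
  rw [volume_pi_pi]
  simp [Real.volume_Icc]
  congr 1
  rw [← two_mul, ENNReal.ofReal_mul (by norm_num)]
  simp

lemma box_indicator_integrable (d : ℕ) (a c : ℝ) (ha : 0 ≤ a) :
    Integrable ((Set.pi Set.univ (fun _ : Fin d => Set.Icc (-a) a)).indicator
      (fun _ : Fin d → ℝ => c)) := by
  have hs : MeasurableSet (Set.pi Set.univ (fun _ : Fin d => Set.Icc (-a) a)) :=
    MeasurableSet.univ_pi (fun _ => measurableSet_Icc)
  rw [integrable_indicator_iff hs]
  apply (integrableOn_const_iff (C := c)).mpr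
  right
  rw [volume_box d a ha]
  exact ENNReal.pow_lt_top ENNReal.ofReal_lt_top

lemma box_indicator_integral (d : ℕ) (a c : ℝ) (ha : 0 ≤ a) :
    (∫ x : Fin d → ℝ, (Set.pi Set.univ (fun _ : Fin d => Set.Icc (-a) a)).indicator
      (fun _ => c) x) = (2*a)^d * c := by
  have hs : MeasurableSet (Set.pi Set.univ (fun _ : Fin d => Set.Icc (-a) a)) :=
    MeasurableSet.univ_pi (fun _ => measurableSet_Icc)
  rw [integral_indicator_const c hs, measureReal_def, volume_box d a ha, smul_eq_mul]
  rw [← ENNReal.ofReal_pow (by linarith), ENNReal.toReal_ofReal (by positivity)]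

lemma F_integral_lb (d : ℕ) (hd : 1 ≤ d) : (2:ℝ)^(d+1) ≤ ∫ x : Fin d → ℝ, F d x := by
  have h := integral_mono (box_indicator_integrable d 1 2 zero_le_one) (F_integrable d hd) ?_
  · rw [box_indicator_integral d 1 2 zero_le_one] at h
    calc (2:ℝ)^(d+1) = (2*1)^d * 2 := by ring
    _ ≤ _ := h
  · intro x
    by_cases hx : x ∈ Set.pi Set.univ (fun _ : Fin d => Set.Icc (-1:ℝ) 1)
    · rw [Set.indicator_of_mem hx, F_eq_two hx]
    · rw [Set.indicator_of_notMem hx]; exact F_nonneg d x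

lemma F_integral_ub (d : ℕ) (hd : 1 ≤ d) : (∫ x : Fin d → ℝ, F d x) ≤ 2 * 6^d := by
  have h := integral_mono (F_integrable d hd)
    (box_indicator_integrable d 3 2 (by norm_num)) ?_
  · rw [box_indicator_integral d 3 2 (by norm_num)] at h
    calc (∫ x : Fin d → ℝ, F d x) ≤ (2*3)^d * 2 := h
    _ = 2 * 6^d := by ring
  · intro x
    by_cases hx : x ∈ Set.pi Set.univ (fun _ : Fin d => Set.Icc (-3:ℝ) 3)
    · rw [Set.indicator_of_mem hx]; exact F_le_two d x
    · rw [Set.indicator_of_notMem hx, F_eq_zero hd hx]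

lemma trap_intervalIntegrable (a b : ℝ) : IntervalIntegrable trap volume a b :=
  (by unfold trap rect; fun_prop : Continuous trap).intervalIntegrable a b

lemma integral_trap : (∫ x : ℝ, trap x) = 8 := by
  have hind : trap = (Set.Icc (-3:ℝ) 3).indicator trap := by
    funext x
    by_cases hx : x ∈ Set.Icc (-3:ℝ) 3
    · rw [Set.indicator_of_mem hx]
    · rw [Set.indicator_of_notMem hx]
      simp only [Set.mem_Icc, not_and_or, not_le] at hx
      rcases hx with h|h
      · exact trap_eq_zero' (Or.inl h.le)
      · exact trap_eq_zero' (Or.inr h.le)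
  rw [hind, integral_indicator measurableSet_Icc, integral_Icc_eq_integral_Ioc,
    ← intervalIntegral.integral_of_le (by norm_num)]
  have h1 : (∫ x in (-3:ℝ)..(-1), trap x) = 2 := by
    rw [intervalIntegral.integral_congr (g := fun x => x + 3) ?_]
    · rw [show (fun x : ℝ => x + 3) = fun x : ℝ => id (x + 3) from rfl,
        intervalIntegral.integral_comp_add_right id 3]
      norm_num
    · intro x hx
      rw [Set.uIcc_of_le (by norm_num)] at hx
      obtain ⟨ha, hb⟩ := hx
      unfold trap
      rw [rect_of_nonneg (by linarith), rect_of_nonpos (by linarith),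
        rect_of_nonpos (by linarith), rect_of_nonpos (by linarith)]
      ring
  have h2 : (∫ x in (-1:ℝ)..1, trap x) = 4 := by
    rw [intervalIntegral.integral_congr (g := fun _ => 2) ?_]
    · rw [intervalIntegral.integral_const]; norm_num
    · intro x hx
      rw [Set.uIcc_of_le (by norm_num)] at hx
      exact trap_eq_two hx.1 hx.2
  have h3 : (∫ x in (1:ℝ)..3, trap x) = 2 := by
    rw [intervalIntegral.integral_congr (g := fun x => 3 - x) ?_]
    · rw [show (fun x : ℝ => 3 - x) = fun x : ℝ => id (3 - x) from rfl,
        intervalIntegral.integral_comp_sub_left id 3]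
      norm_num
    · intro x hx
      rw [Set.uIcc_of_le (by norm_num)] at hx
      obtain ⟨ha, hb⟩ := hx
      unfold trap
      rw [rect_of_nonneg (by linarith), rect_of_nonneg (by linarith),
        rect_of_nonneg (by linarith), rect_of_nonpos (by linarith)]
      ring
  rw [← intervalIntegral.integral_add_adjacent_intervals (b := (-1:ℝ))
      (trap_intervalIntegrable _ _) (trap_intervalIntegrable _ _),
    ← intervalIntegral.integral_add_adjacent_intervals (a := (-1:ℝ)) (b := (1:ℝ))
      (trap_intervalIntegrable _ _) (trap_intervalIntegrable _ _), h1, h2, h3]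
  norm_num

lemma F_one_integral : (∫ x : Fin 1 → ℝ, F 1 x) = 8 := by
  have hF : F 1 = fun x : Fin 1 → ℝ => trap (x 0) := by
    funext x
    unfold F
    simp only [Nat.cast_one, Fin.sum_univ_one]
    rw [show (2:ℝ) * ((1:ℝ) - 1) = 0 by ring, sub_zero, rect_of_nonneg (trap_nonneg _)]
  rw [hF]
  have := (volume_preserving_funUnique (Fin 1) ℝ).integral_comp
    (MeasurableEquiv.funUnique (Fin 1) ℝ).measurableEmbedding trap
  exact this.trans integral_trap

lemma euclidean_eq (d : ℕ) :
    (fun x : EuclideanSpace ℝ (Fin d) => rect ((∑ j, trap (x j)) - 2 * ((d : ℝ) - 1)))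
      = (F d) ∘ ((MeasurableEquiv.toLp 2 (Fin d → ℝ)).symm) := rfl

lemma euclidean_integral (d : ℕ) :
    (∫ x : EuclideanSpace ℝ (Fin d), rect ((∑ j, trap (x j)) - 2 * ((d : ℝ) - 1)))
      = ∫ y : Fin d → ℝ, F d y := by
  rw [euclidean_eq d]
  exact (EuclideanSpace.volume_preserving_symm_measurableEquiv_toLp (Fin d)).integral_comp
    ((MeasurableEquiv.toLp 2 (Fin d → ℝ)).symm).measurableEmbedding (F d)

theorem statement1 (d : ℕ) (hd : 1 ≤ d) :
    Integrable (fun x : EuclideanSpace ℝ (Fin d) =>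
      rect ((∑ j, trap (x j)) - 2 * ((d : ℝ) - 1))) ∧
    (2 : ℝ) ^ (d + 1) ≤
      (∫ x : EuclideanSpace ℝ (Fin d), rect ((∑ j, trap (x j)) - 2 * ((d : ℝ) - 1))) ∧
    (∫ x : EuclideanSpace ℝ (Fin d), rect ((∑ j, trap (x j)) - 2 * ((d : ℝ) - 1)))
      ≤ 2 * 6 ^ d ∧
    (6 : ℝ) ^ (-(d : ℤ)) / 2 ≤
      (∫ x : EuclideanSpace ℝ (Fin d), rect ((∑ j, trap (x j)) - 2 * ((d : ℝ) - 1)))⁻¹ ∧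
    (∫ x : EuclideanSpace ℝ (Fin d), rect ((∑ j, trap (x j)) - 2 * ((d : ℝ) - 1)))⁻¹
      ≤ (2 : ℝ) ^ (-((d : ℤ) + 1)) ∧
    (d = 1 →
      (∫ x : EuclideanSpace ℝ (Fin d), rect ((∑ j, trap (x j)) - 2 * ((d : ℝ) - 1)))⁻¹ = 1 / 8) := by
  have hint : Integrable (fun x : EuclideanSpace ℝ (Fin d) =>
      rect ((∑ j, trap (x j)) - 2 * ((d : ℝ) - 1))) := by
    rw [euclidean_eq d]
    exact ((EuclideanSpace.volume_preserving_symm_measurableEquiv_toLp (Fin d)).integrable_comp_emb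
      ((MeasurableEquiv.toLp 2 (Fin d → ℝ)).symm).measurableEmbedding).mpr (F_integrable d hd)
  rw [euclidean_integral d]
  have hlb := F_integral_lb d hd
  have hub := F_integral_ub d hd
  have hpos : (0:ℝ) < ∫ y : Fin d → ℝ, F d y := lt_of_lt_of_le (by positivity) hlb
  refine ⟨hint, hlb, hub, ?_, ?_, ?_⟩
  · have h1 : ((2:ℝ) * 6 ^ d)⁻¹ ≤ (∫ y : Fin d → ℝ, F d y)⁻¹ :=
      inv_anti₀ hpos hub
    calc (6 : ℝ) ^ (-(d : ℤ)) / 2 = ((2:ℝ) * 6 ^ d)⁻¹ := by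
          rw [zpow_neg, zpow_natCast]
          rw [mul_inv]
          ring
      _ ≤ _ := h1
  · have h1 : (∫ y : Fin d → ℝ, F d y)⁻¹ ≤ ((2:ℝ) ^ (d+1))⁻¹ :=
      inv_anti₀ (by positivity) hlb
    calc (∫ y : Fin d → ℝ, F d y)⁻¹ ≤ ((2:ℝ) ^ (d+1))⁻¹ := h1
      _ = (2 : ℝ) ^ (-((d : ℤ) + 1)) := by
          rw [show -((d:ℤ)+1) = -(((d+1 : ℕ)):ℤ) by push_cast; ring, zpow_neg, zpow_natCast]
  · intro h
    subst h
    rw [F_one_integral]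
    norm_num
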